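/- Consider the ε-greedy policy set: N = K policies on K outcomes, where policy θ_i assigns probability (1−ε)/N + ε·𝟙{x = x_i} to outcome x, with ε ∈ (0,1) and distinct outcomes x_1,…,x_N. Then its chi-squared capacity equals ε²(N−1), attained in the limit by the uniform distribution over the policies. -/

import Mathlib

open Finset

noncomputable def epsGreedy (N : ℕ) (ε : ℝ) (i x : Fin N) : ℝ :=
  (1 - ε) / N + if x = i then ε else 0

lemma mix_eq (N : ℕ) (ε : ℝ) (τ : Fin N → ℝ) (hsum : ∑ i, τ i = 1) (x : Fin N) :
    (∑ j, τ j * epsGreedy N ε j x) = (1 - ε) / N + ε * τ x := by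
  have h : ∀ j, τ j * epsGreedy N ε j x
      = τ j * ((1 - ε) / N) + (if x = j then ε * τ j else 0) := by
    intro j; unfold epsGreedy; split <;> ring
  rw [Finset.sum_congr rfl (fun j _ => h j), Finset.sum_add_distrib,
    ← Finset.sum_mul, hsum, Finset.sum_ite_eq]
  simp [mem_univ]

lemma reduce (N : ℕ) (hN : 2 ≤ N) (ε : ℝ) (τ : Fin N → ℝ) (h0 : ∀ i, 0 ≤ τ i)
    (hsum : ∑ i, τ i = 1) (hε0 : 0 < ε) (hε1 : ε < 1) :
    (∑ i, τ i * ∑ x, (∑ j, τ j * epsGreedy N ε j x) *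
        (epsGreedy N ε i x / (∑ j, τ j * epsGreedy N ε j x) - 1) ^ 2)
    = ∑ x, ε ^ 2 * (τ x * (1 - τ x)) / ((1 - ε) / N + ε * τ x) := by
  have hNpos : (0:ℝ) < N := by
    have : (2:ℝ) ≤ N := by exact_mod_cast hN
    linarith
  have hMpos : ∀ x, (0:ℝ) < (1 - ε) / N + ε * τ x := by
    intro x
    have h1 : (0:ℝ) < (1 - ε) / N := div_pos (by linarith) hNpos
    have h2 : 0 ≤ ε * τ x := mul_nonneg hε0.le (h0 x)
    linarith
  simp only [mix_eq N ε τ hsum]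
  have hterm : ∀ i x, ((1 - ε) / N + ε * τ x) *
      (epsGreedy N ε i x / ((1 - ε) / N + ε * τ x) - 1) ^ 2
      = ε ^ 2 * ((if x = i then (1:ℝ) else 0) - τ x) ^ 2 / ((1 - ε) / N + ε * τ x) := by
    intro i x
    have hM := (hMpos x).ne'
    have hθ : epsGreedy N ε i x
        = ((1 - ε) / N + ε * τ x) + ε * ((if x = i then (1:ℝ) else 0) - τ x) := by
      unfold epsGreedy; split <;> ring
    have key : ∀ M a : ℝ, M ≠ 0 → M * ((M + a) / M - 1) ^ 2 = a ^ 2 / M := by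
      intro M a h; field_simp; ring
    rw [hθ, key _ _ hM, mul_pow, mul_div_assoc]
  simp only [hterm]
  simp_rw [Finset.mul_sum]
  rw [Finset.sum_comm]
  refine Finset.sum_congr rfl (fun x _ => ?_)
  have hinner : ∑ i, τ i * ((if x = i then (1:ℝ) else 0) - τ x) ^ 2
      = τ x * (1 - τ x) := by
    have h : ∀ i, τ i * ((if x = i then (1:ℝ) else 0) - τ x) ^ 2
        = (if x = i then τ i * (1 - 2 * τ x) else 0) + τ i * (τ x) ^ 2 := by
      intro i; split <;> ring
    rw [Finset.sum_congr rfl (fun i _ => h i), Finset.sum_add_distrib,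
      Finset.sum_ite_eq, ← Finset.sum_mul, hsum]
    simp [mem_univ]; ring
  calc ∑ i, τ i * (ε ^ 2 * ((if x = i then (1:ℝ) else 0) - τ x) ^ 2 / ((1 - ε) / N + ε * τ x))
      = (∑ i, τ i * ((if x = i then (1:ℝ) else 0) - τ x) ^ 2) * (ε ^ 2 / ((1 - ε) / N + ε * τ x)) := by
        rw [Finset.sum_mul]; exact Finset.sum_congr rfl (fun i _ => by ring)
    _ = ε ^ 2 * (τ x * (1 - τ x)) / ((1 - ε) / N + ε * τ x) := by rw [hinner]; ring

lemma pointwise_bound (n ε t : ℝ) (hn : 2 ≤ n) (hε0 : 0 < ε) (hε1 : ε < 1)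
    (ht : 0 ≤ t) :
    ε ^ 2 * (t * (1 - t)) / ((1 - ε) / n + ε * t)
      ≤ ε ^ 2 * ((n - 1 + ((1 - ε) * (n - 2) - ε) * (n * t - 1)) / n) := by
  have hn0 : (0:ℝ) < n := by linarith
  have hA : (0:ℝ) < 1 - ε + n * ε * t := by
    have := mul_nonneg (mul_nonneg hn0.le hε0.le) ht
    linarith
  have hM' : (1 - ε) / n + ε * t = (1 - ε + n * ε * t) / n := by
    field_simp
  rw [hM', div_div_eq_mul_div, ← mul_div_assoc]
  rw [div_le_div_iff₀ hA hn0]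
  have h1 : (0:ℝ) ≤ ε * (n - 1) := mul_nonneg hε0.le (by linarith)
  have hfac : (0:ℝ) ≤ (1 - ε) * (ε * (n - 1) + 1) :=
    mul_nonneg (by linarith) (by linarith)
  nlinarith [mul_nonneg (mul_nonneg (sq_nonneg ε) hfac) (sq_nonneg (n * t - 1))]

theorem epsGreedy_capacity (N : ℕ) (hN : 2 ≤ N) (ε : ℝ) (hε : ε ∈ Set.Ioo (0 : ℝ) 1) :
    sSup {v : ℝ | ∃ τ : Fin N → ℝ, (∀ i, 0 ≤ τ i) ∧ (∑ i, τ i = 1) ∧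
        v = ∑ i, τ i * ∑ x, (∑ j, τ j * epsGreedy N ε j x) *
              (epsGreedy N ε i x / (∑ j, τ j * epsGreedy N ε j x) - 1) ^ 2}
      = ε ^ 2 * (N - 1) := by
  obtain ⟨hε0, hε1⟩ := hε
  have hn : (2:ℝ) ≤ N := by exact_mod_cast hN
  have hn0 : (0:ℝ) < N := by linarith
  have hNne : (N:ℝ) ≠ 0 := hn0.ne'
  -- membership: the uniform prior attains the value
  have hmem : ε ^ 2 * ((N:ℝ) - 1) ∈ {v : ℝ | ∃ τ : Fin N → ℝ, (∀ i, 0 ≤ τ i) ∧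
      (∑ i, τ i = 1) ∧
      v = ∑ i, τ i * ∑ x, (∑ j, τ j * epsGreedy N ε j x) *
            (epsGreedy N ε i x / (∑ j, τ j * epsGreedy N ε j x) - 1) ^ 2} := by
    refine ⟨fun _ => 1 / N, fun i => by positivity, ?_, ?_⟩
    · simp [Finset.sum_const, card_univ]
      field_simp
    · have hsum : (∑ i : Fin N, (1:ℝ) / N) = 1 := by
        simp [Finset.sum_const, card_univ]
        field_simp
      rw [reduce N hN ε _ (fun i => by positivity) hsum hε0 hε1]
      have hterm : ∀ x : Fin N, ε ^ 2 * ((1 / (N:ℝ)) * (1 - 1 / N)) /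
          ((1 - ε) / N + ε * (1 / N)) = ε ^ 2 * (1 - 1 / N) := by
        intro x
        have hden : (1 - ε) / (N:ℝ) + ε * (1 / N) = 1 / N := by field_simp; ring
        rw [hden]
        field_simp
      rw [Finset.sum_congr rfl (fun x _ => hterm x), Finset.sum_const, card_univ,
        Fintype.card_fin, nsmul_eq_mul]
      field_simp
  -- the upper bound
  have hub : ∀ v ∈ {v : ℝ | ∃ τ : Fin N → ℝ, (∀ i, 0 ≤ τ i) ∧ (∑ i, τ i = 1) ∧
      v = ∑ i, τ i * ∑ x, (∑ j, τ j * epsGreedy N ε j x) *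
            (epsGreedy N ε i x / (∑ j, τ j * epsGreedy N ε j x) - 1) ^ 2},
      v ≤ ε ^ 2 * ((N:ℝ) - 1) := by
    rintro v ⟨τ, h0, hsum, rfl⟩
    rw [reduce N hN ε τ h0 hsum hε0 hε1]
    set m : ℝ := (1 - ε) * ((N:ℝ) - 2) - ε with hm
    have hle : ∀ x : Fin N, ε ^ 2 * (τ x * (1 - τ x)) / ((1 - ε) / N + ε * τ x)
        ≤ ε ^ 2 * (((N:ℝ) - 1 + m * (N * τ x - 1)) / N) :=
      fun x => pointwise_bound N ε (τ x) hn hε0 hε1 (h0 x)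
    calc (∑ x, ε ^ 2 * (τ x * (1 - τ x)) / ((1 - ε) / N + ε * τ x))
        ≤ ∑ x : Fin N, ε ^ 2 * (((N:ℝ) - 1 + m * (N * τ x - 1)) / N) :=
          Finset.sum_le_sum (fun x _ => hle x)
      _ = ε ^ 2 * ((N:ℝ) - 1) := by
          have h1 : ∀ x : Fin N, ε ^ 2 * (((N:ℝ) - 1 + m * (N * τ x - 1)) / N)
              = (ε ^ 2 / N) * ((N:ℝ) - 1 - m) + (ε ^ 2 / N * (m * N)) * τ x := by
            intro x; field_simp; ring
          rw [Finset.sum_congr rfl (fun x _ => h1 x), Finset.sum_add_distrib,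
            Finset.sum_const, card_univ, Fintype.card_fin, ← Finset.mul_sum, hsum,
            nsmul_eq_mul, mul_one, hm]
          field_simp
          ring
  exact le_antisymm (csSup_le ⟨_, hmem⟩ hub) (le_csSup ⟨_, hub⟩ hmem)
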